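/- The polynomial x₃² x₀² − 6 x₃ x₂ x₁ x₀ − 3 x₂² x₁² + 4 x₂³ x₀ + 4 x₃ x₁³ is irreducible in the polynomial ring ℝ[x₀, x₁, x₂, x₃] (MvPolynomial (Fin 4) ℝ). -/

import Mathlib

open MvPolynomial

/-- The image of our quartic under `finSuccEquiv ℝ 3`: a quadratic in the
outer variable (originally `x₀`) over `ℝ[x₁,x₂,x₃]` (indices shifted down). -/
noncomputable def pQ : Polynomial (MvPolynomial (Fin 3) ℝ) :=
  Polynomial.C ((X 2)^2) * Polynomial.X ^ 2
    + Polynomial.C (4*(X 1)^3 - 6 * X 2 * X 1 * X 0) * Polynomial.X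
    + Polynomial.C (4 * X 2 * (X 0)^3 - 3*(X 1)^2*(X 0)^2)

lemma pQ_coeff2 : pQ.coeff 2 = (X 2)^2 := by
  simp only [pQ, Polynomial.coeff_add, Polynomial.coeff_C_mul, Polynomial.coeff_X_pow,
    Polynomial.coeff_X, Polynomial.coeff_C]
  norm_num

lemma pQ_coeff1 : pQ.coeff 1 = 4*(X 1)^3 - 6 * X 2 * X 1 * X 0 := by
  simp only [pQ, Polynomial.coeff_add, Polynomial.coeff_C_mul, Polynomial.coeff_X_pow,
    Polynomial.coeff_X, Polynomial.coeff_C]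
  norm_num

lemma primeX2 : Prime (X (2:Fin 3) : MvPolynomial (Fin 3) ℝ) := by
  let e := (renameEquiv ℝ (Equiv.swap (0:Fin 3) 2)).trans (finSuccEquiv ℝ 2)
  have h : e (X 2) = Polynomial.X := by
    show (finSuccEquiv ℝ 2) (rename (Equiv.swap (0:Fin 3) 2) (X 2)) = Polynomial.X
    rw [rename_X, show (Equiv.swap (0:Fin 3) 2) 2 = 0 by decide, finSuccEquiv_X_zero]
  rw [← MulEquiv.prime_iff e.toMulEquiv, show e.toMulEquiv (X 2) = e (X 2) from rfl, h]
  exact Polynomial.prime_X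

lemma notdvd : ¬ ((X (2:Fin 3) : MvPolynomial (Fin 3) ℝ) ∣ 4*(X 1)^3) := by
  intro h
  have h2 := map_dvd (eval (fun i => if i = 2 then (0:ℝ) else 1)) h
  simp only [map_mul, map_pow, map_ofNat, eval_X] at h2
  norm_num at h2
  exact absurd h2 (by decide)

lemma prim : pQ.IsPrimitive := by
  intro r hr
  rw [Polynomial.C_dvd_iff_dvd_coeff] at hr
  have h2 : r ∣ (X 2)^2 := pQ_coeff2 ▸ hr 2
  have h1 : r ∣ 4*(X 1)^3 - 6 * X 2 * X 1 * X 0 := pQ_coeff1 ▸ hr 1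
  by_contra hu
  have hr0 : r ≠ 0 := by
    rintro rfl
    rw [zero_dvd_iff] at h2
    exact pow_ne_zero 2 (X_ne_zero (R := ℝ) (2:Fin 3)) h2
  obtain ⟨q, hq, hqr⟩ := WfDvdMonoid.exists_irreducible_factor hu hr0
  have hqp : Prime q := (UniqueFactorizationMonoid.irreducible_iff_prime).mp hq
  have hq2 : q ∣ X 2 := by
    have : q ∣ (X 2) * (X 2) := by rw [← sq]; exact hqr.trans h2
    rcases hqp.2.2 _ _ this with h | h <;> exact h
  have hassoc : Associated q (X 2) :=
    hq.associated_of_dvd primeX2.irreducible hq2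
  have hX2r : (X (2:Fin 3) : MvPolynomial (Fin 3) ℝ) ∣ r := hassoc.symm.dvd.trans hqr
  refine notdvd ?_
  have hd : (X (2:Fin 3) : MvPolynomial (Fin 3) ℝ) ∣ 6 * X 2 * X 1 * X 0 :=
    ⟨6 * X 1 * X 0, by ring⟩
  simpa using dvd_add (hX2r.trans h1) hd

lemma pQ_irred : Irreducible pQ := by
  classical
  letI := UniqueFactorizationMonoid.normalizationMonoid (α := MvPolynomial (Fin 3) ℝ)
  letI : NormalizedGCDMonoid (MvPolynomial (Fin 3) ℝ) :=
    UniqueFactorizationMonoid.toNormalizedGCDMonoid _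
  let K := FractionRing (MvPolynomial (Fin 3) ℝ)
  rw [prim.irreducible_iff_irreducible_map_fraction_map (K := K)]
  set φ := algebraMap (MvPolynomial (Fin 3) ℝ) K with hφ
  have hinj := IsFractionRing.injective (MvPolynomial (Fin 3) ℝ) K
  have hmap : pQ.map φ = Polynomial.C (φ ((X 2)^2)) * Polynomial.X ^ 2
      + Polynomial.C (φ (4*(X 1)^3 - 6 * X 2 * X 1 * X 0)) * Polynomial.X
      + Polynomial.C (φ (4 * X 2 * (X 0)^3 - 3*(X 1)^2*(X 0)^2)) := by
    simp only [pQ, Polynomial.map_add, Polynomial.map_mul, Polynomial.map_pow,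
      Polynomial.map_C, Polynomial.map_X]
  have hA : φ ((X 2)^2) ≠ 0 := by
    intro h
    have h2 : φ (X 2) = 0 := by simpa using h
    exact X_ne_zero (R := ℝ) (2:Fin 3) (hinj (by rw [h2, map_zero]))
  have hdeg : (pQ.map φ).natDegree = 2 := by
    rw [hmap]; exact Polynomial.natDegree_quadratic hA
  have hne : pQ.map φ ≠ 0 := fun h => by simp [h] at hdeg
  rw [Polynomial.irreducible_iff_roots_eq_zero_of_degree_le_three (by omega) (by omega)]
  by_contra hroots
  obtain ⟨z, hz⟩ := Multiset.exists_mem_of_ne_zero hroots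
  rw [Polynomial.mem_roots hne] at hz
  have heval : φ ((X 2)^2) * (z*z) + φ (4*(X 1)^3 - 6 * X 2 * X 1 * X 0) * z
      + φ (4 * X 2 * (X 0)^3 - 3*(X 1)^2*(X 0)^2) = 0 := by
    have h := hz
    simp only [hmap, Polynomial.IsRoot, Polynomial.eval_add, Polynomial.eval_mul,
      Polynomial.eval_C, Polynomial.eval_pow, Polynomial.eval_X] at h
    rw [← h]; ring
  have hds : ∀ s : K, discrim (φ ((X 2)^2)) (φ (4*(X 1)^3 - 6 * X 2 * X 1 * X 0))
      (φ (4 * X 2 * (X 0)^3 - 3*(X 1)^2*(X 0)^2)) ≠ s ^ 2 := by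
    intro s hs
    have hid : (4*(X 1)^3 - 6 * X 2 * X 1 * X 0)^2
        - 4 * ((X 2)^2) * (4 * X 2 * (X 0)^3 - 3*(X 1)^2*(X 0)^2)
        = 16 * (((X 1 : MvPolynomial (Fin 3) ℝ))^2 - X 2 * X 0)^3 := by ring
    have hd : φ (16 * (((X 1 : MvPolynomial (Fin 3) ℝ))^2 - X 2 * X 0)^3) = s^2 := by
      rw [← hs, discrim, ← hid]
      push_cast [map_sub, map_mul, map_pow, map_ofNat]
      ring
    have hint : IsIntegral (MvPolynomial (Fin 3) ℝ) s := by
      refine ⟨Polynomial.X^2 - Polynomial.C (16 * (((X 1 : MvPolynomial (Fin 3) ℝ))^2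
        - X 2 * X 0)^3), Polynomial.monic_X_pow_sub_C _ two_ne_zero, ?_⟩
      simp only [Polynomial.eval₂_sub, Polynomial.eval₂_pow, Polynomial.eval₂_X,
        Polynomial.eval₂_C, ← hφ, hd]
      ring
    obtain ⟨y, hy⟩ := IsIntegrallyClosed.isIntegral_iff.mp hint
    have heq : y^2 = 16 * (((X 1 : MvPolynomial (Fin 3) ℝ))^2 - X 2 * X 0)^3 := by
      apply hinj
      rw [map_pow, hy, ← hd]
    have := congrArg (eval (fun i : Fin 3 => if i = 1 then (0:ℝ) else 1)) heq
    simp only [map_mul, map_pow, map_sub, map_ofNat, eval_X] at this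
    norm_num at this
    rw [if_neg (by decide)] at this
    nlinarith [sq_nonneg (eval (fun i : Fin 3 => if i = 1 then (0:ℝ) else 1) y), this]
  exact quadratic_ne_zero_of_discrim_ne_sq hds z heval

lemma key : (finSuccEquiv ℝ 3) ((X 3) ^ 2 * (X 0) ^ 2 - 6 * X 3 * X 2 * X 1 * X 0
      - 3 * (X 2) ^ 2 * (X 1) ^ 2 + 4 * (X 2) ^ 3 * X 0 + 4 * X 3 * (X 1) ^ 3
      : MvPolynomial (Fin 4) ℝ) = pQ := by
  have h1 : (X (1:Fin 4) : MvPolynomial (Fin 4) ℝ) = X (Fin.succ 0) := by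
    rw [show (1:Fin 4) = Fin.succ 0 by decide]
  have h2 : (X (2:Fin 4) : MvPolynomial (Fin 4) ℝ) = X (Fin.succ 1) := by
    rw [show (2:Fin 4) = Fin.succ 1 by decide]
  have h3 : (X (3:Fin 4) : MvPolynomial (Fin 4) ℝ) = X (Fin.succ 2) := by
    rw [show (3:Fin 4) = Fin.succ 2 by decide]
  rw [h1, h2, h3]
  simp only [map_add, map_sub, map_mul, map_pow, map_ofNat, finSuccEquiv_X_zero,
    finSuccEquiv_X_succ, pQ]
  ring

/-- The polynomial
`x₃² x₀² − 6 x₃x₂x₁x₀ − 3 x₂²x₁² + 4 x₂³x₀ + 4 x₃x₁³` is irreducible in `ℝ[x₀,x₁,x₂,x₃]`. -/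
theorem stmt17 :
    Irreducible ((X 3) ^ 2 * (X 0) ^ 2 - 6 * X 3 * X 2 * X 1 * X 0
      - 3 * (X 2) ^ 2 * (X 1) ^ 2 + 4 * (X 2) ^ 3 * X 0 + 4 * X 3 * (X 1) ^ 3
      : MvPolynomial (Fin 4) ℝ) := by
  refine (MulEquiv.irreducible_iff (finSuccEquiv ℝ 3).toMulEquiv).mp ?_
  show Irreducible ((finSuccEquiv ℝ 3) _)
  rw [key]
  exact pQ_irred
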